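/- Let A be the 3×2 matrix with rows (1,0), (0,1), (α, 1-α) where α ∈ [0,1] and α ≠ 1/2. Then for any x, x' ∈ R^2 and any 3×3 permutation matrix Π, if Ax = Π A x' then x = x'. -/

import Mathlib

open Matrix

set_option maxHeartbeats 2000000 in
/-- For the 3×2 matrix with rows (1,0), (0,1), (α, 1-α) with α ∈ [0,1], α ≠ 1/2,
the signal `x` is uniquely determined by the unlabeled entries of `A x`: if
`A x = Π (A x')` for some permutation matrix `Π`, then `x = x'`. -/
theorem stmt5 (α : ℝ) (hα : α ∈ Set.Icc (0 : ℝ) 1) (hne : α ≠ 1 / 2)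
    (x x' : Fin 2 → ℝ) (σ : Equiv.Perm (Fin 3))
    (h : (!![1, 0; 0, 1; α, 1 - α] : Matrix (Fin 3) (Fin 2) ℝ).mulVec x
        = (σ.permMatrix ℝ).mulVec
            ((!![1, 0; 0, 1; α, 1 - α] : Matrix (Fin 3) (Fin 2) ℝ).mulVec x')) :
    x = x' := by
  obtain ⟨ha0, ha1⟩ := hα
  rcases hne.lt_or_gt with hlt | hlt <;>
  rcases (show ∀ τ : Equiv.Perm (Fin 3), τ = 1 ∨ τ = Equiv.swap 0 1 ∨ τ = Equiv.swap 0 2 ∨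
      τ = Equiv.swap 1 2 ∨ τ = Equiv.swap 0 1 * Equiv.swap 0 2 ∨
      τ = Equiv.swap 0 2 * Equiv.swap 0 1 by decide) σ with rfl | rfl | rfl | rfl | rfl | rfl <;>
  · have h0' := congrFun h 0
    have h1' := congrFun h 1
    have h2' := congrFun h 2
    simp [mulVec, dotProduct, Fin.sum_univ_succ, Equiv.Perm.permMatrix,
      PEquiv.toMatrix, Equiv.toPEquiv, Equiv.swap_apply_def, Equiv.Perm.mul_apply] at h0' h1' h2'
    clear h
    have e0 : x 0 = x' 0 := by
      nlinarith [sq_nonneg (2*α - 1), sq_nonneg (x' 0 - x' 1), sq_nonneg (x 0 - x 1),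
        mul_nonneg ha0 (sub_nonneg.mpr ha1)]
    have e1 : x 1 = x' 1 := by
      nlinarith [sq_nonneg (2*α - 1), sq_nonneg (x' 0 - x' 1), sq_nonneg (x 0 - x 1),
        mul_nonneg ha0 (sub_nonneg.mpr ha1)]
    funext i
    fin_cases i
    · exact e0
    · exact e1
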